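/- Let ⊕_E ℝ be the real vector space of finitely supported functions E → ℝ equipped with a linear vector-space order ≤. For a vector a define W_a := H_a + ℝ • a, where H_a := span_ℝ {x | 0 ≤ x and n • x ≤ |a| for every natural number n} and |a| := max(a, −a). Then the family {W_a | a ∈ ⊕_E ℝ} is a chain under set inclusion (for all a, b either W_a ⊆ W_b or W_b ⊆ W_a) and ⋃_{a} W_a = ⊕_E ℝ. -/

import Mathlib

/-- A linear vector-space order on `⊕_E ℝ`, given as a binary relation. -/
def IsLinVecOrder {E : Type*} (le : (E →₀ ℝ) → (E →₀ ℝ) → Prop) : Prop :=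
  IsLinearOrder (E →₀ ℝ) le ∧
  (∀ x y z : E →₀ ℝ, le x y → le (x + z) (y + z)) ∧
  (∀ (α : ℝ) (v : E →₀ ℝ), 0 ≤ α → le 0 v → le 0 (α • v))

open Classical in
/-- `|a| = max (a, -a)` with respect to a total order `le`. -/
noncomputable def vabs {E : Type*} (le : (E →₀ ℝ) → (E →₀ ℝ) → Prop) (a : E →₀ ℝ) :
    E →₀ ℝ :=
  if le 0 a then a else -a

/-- `H_a = span_ℝ {x | 0 ≤ x ∧ ∀ n : ℕ, n • x ≤ |a|}`. -/
noncomputable def Hsub {E : Type*} (le : (E →₀ ℝ) → (E →₀ ℝ) → Prop) (a : E →₀ ℝ) :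
    Submodule ℝ (E →₀ ℝ) :=
  Submodule.span ℝ {x | le 0 x ∧ ∀ n : ℕ, le (n • x) (vabs le a)}

section Aux
variable {E : Type*} {le : (E →₀ ℝ) → (E →₀ ℝ) → Prop} (hle : IsLinVecOrder le)
include hle

lemma aux_trans {x y z : E →₀ ℝ} (h1 : le x y) (h2 : le y z) : le x z := by
  haveI := hle.1; exact _root_.trans_of le h1 h2

lemma aux_refl (x : E →₀ ℝ) : le x x := by
  haveI := hle.1; exact _root_.refl_of le x

lemma aux_total (x y : E →₀ ℝ) : le x y ∨ le y x := by
  haveI := hle.1; exact Std.Total.total x y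

lemma aux_antisymm {x y : E →₀ ℝ} (h1 : le x y) (h2 : le y x) : x = y := by
  haveI := hle.1; exact _root_.antisymm_of le h1 h2

lemma aux_sub {x y : E →₀ ℝ} (h : le x y) : le 0 (y - x) := by
  have := hle.2.1 x y (-x) h
  simpa [sub_eq_add_neg] using this

lemma aux_of_sub {x y : E →₀ ℝ} (h : le 0 (y - x)) : le x y := by
  have := hle.2.1 0 (y - x) x h
  simpa using this

lemma aux_smul {r : ℝ} (hr : 0 ≤ r) {x y : E →₀ ℝ} (h : le x y) : le (r • x) (r • y) := by
  apply aux_of_sub hle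
  have := hle.2.2 r (y - x) hr (aux_sub hle h)
  simpa [smul_sub] using this

lemma aux_add {x y z w : E →₀ ℝ} (h1 : le x y) (h2 : le z w) : le (x + z) (y + w) := by
  apply aux_trans hle (hle.2.1 x y z h1)
  have := hle.2.1 z w y h2
  simpa [add_comm] using this

lemma vabs_nonneg (a : E →₀ ℝ) : le 0 (vabs le a) := by
  unfold vabs
  split
  · assumption
  · rename_i h
    rcases aux_total hle 0 a with h' | h'
    · exact absurd h' h
    · have := hle.2.1 a 0 (-a) h'
      simpa using this

lemma le_vabs (a : E →₀ ℝ) : le a (vabs le a) := by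
  unfold vabs
  split
  · exact aux_refl hle a
  · rename_i h
    rcases aux_total hle 0 a with h' | h'
    · exact absurd h' h
    · have h0 : le 0 (-a) := by have := hle.2.1 a 0 (-a) h'; simpa using this
      exact aux_trans hle h' (by have := hle.2.1 0 (-a) 0 h0; simpa using this)

omit hle in
lemma vabs_eq_or (a : E →₀ ℝ) : vabs le a = a ∨ vabs le a = -a := by
  unfold vabs; split <;> simp

lemma aux_cancel {v : E →₀ ℝ} (hv : ¬ le v 0) {r s : ℝ} (h : le (r • v) (s • v)) : r ≤ s := by
  by_contra hrs
  push_neg at hrs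
  have h1 : le 0 ((s - r) • v) := by
    have := aux_sub hle h
    simpa [sub_smul] using this
  have hpos : (0:ℝ) ≤ -(1/(s-r)) := by
    have : s - r < 0 := by linarith
    have := div_neg_of_pos_of_neg one_pos this
    linarith
  have h2 : le 0 ((-(1/(s-r))) • ((s - r) • v)) := hle.2.2 _ _ hpos h1
  have hne : s - r ≠ 0 := sub_ne_zero_of_ne (ne_of_lt hrs)
  rw [smul_smul, neg_mul, one_div, inv_mul_cancel₀ hne] at h2
  have : le v 0 := by
    have := hle.2.1 0 (-(1:ℝ) • v) v h2
    simpa using this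
  exact hv this

lemma mem_W {b x : E →₀ ℝ} (hx0 : le 0 x) (hxb : le x (vabs le b)) :
    x ∈ Hsub le b ⊔ Submodule.span ℝ {b} := by
  by_cases hb : le (vabs le b) 0
  · have hb0 : (0 : E →₀ ℝ) = vabs le b := aux_antisymm hle (vabs_nonneg hle b) hb
    have hx : x = 0 := (aux_antisymm hle hx0 (by rw [hb0]; exact hxb)).symm
    rw [hx]; exact zero_mem _
  · set b0 := vabs le b with hb0def
    set S : Set ℝ := {r : ℝ | le (r • b0) x} with hSdef
    have h0S : (0:ℝ) ∈ S := by
      show le ((0:ℝ) • b0) x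
      simpa using hx0
    have hbdd : BddAbove S := by
      refine ⟨1, fun r hr => aux_cancel hle hb ?_⟩
      rw [one_smul]
      exact aux_trans hle hr hxb
    set α := sSup S with hα
    set y := x - α • b0 with hy
    have hxeq : α • b0 + y = x := by rw [hy]; abel
    have hkey : (le 0 y ∧ ∀ n : ℕ, le (n • y) b0) ∨ (le 0 (-y) ∧ ∀ n : ℕ, le (n • (-y)) b0) := by
      rcases aux_total hle 0 y with hy0 | hy0
      · left
        refine ⟨hy0, fun n => ?_⟩
        by_contra hn
        rcases aux_total hle (n • y) b0 with h | h
        · exact hn h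
        have hn0 : (n:ℝ) ≠ 0 := by
          rintro hh
          have : n = 0 := by exact_mod_cast hh
          rw [this] at hn
          simp only [zero_smul] at hn
          exact hn (vabs_nonneg hle b)
        have hstep : le (((n:ℝ)⁻¹) • b0) y := by
          have := aux_smul hle (le_of_lt (by positivity : (0:ℝ) < (n:ℝ)⁻¹)) (show le b0 (n • y) from h)
          rwa [← Nat.cast_smul_eq_nsmul ℝ n y, smul_smul, inv_mul_cancel₀ hn0, one_smul] at this
        have hmem : (α + (n:ℝ)⁻¹) ∈ S := by
          show le ((α + (n:ℝ)⁻¹) • b0) x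
          rw [add_smul]
          have := aux_add hle (aux_refl hle (α • b0)) hstep
          rw [hxeq] at this
          exact this
        have := le_csSup hbdd hmem
        have hpos : (0:ℝ) < (n:ℝ)⁻¹ := by positivity
        linarith
      · right
        have hy0' : le 0 (-y) := by
          have := hle.2.1 y 0 (-y) hy0
          simpa using this
        refine ⟨hy0', fun n => ?_⟩
        by_contra hn
        rcases aux_total hle (n • (-y)) b0 with h | h
        · exact hn h
        have hn0 : (n:ℝ) ≠ 0 := by
          rintro hh
          have : n = 0 := by exact_mod_cast hh
          rw [this] at hn
          simp only [zero_smul] at hn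
          exact hn (vabs_nonneg hle b)
        have hstep : le (((n:ℝ)⁻¹) • b0) (-y) := by
          have := aux_smul hle (le_of_lt (by positivity : (0:ℝ) < (n:ℝ)⁻¹)) (show le b0 (n • (-y)) from h)
          rwa [← Nat.cast_smul_eq_nsmul ℝ n (-y), smul_smul, inv_mul_cancel₀ hn0, one_smul] at this
        have hxle : le x ((α - (n:ℝ)⁻¹) • b0) := by
          apply aux_of_sub hle
          have := aux_sub hle hstep
          have heq : -y - ((n:ℝ)⁻¹) • b0 = (α - (n:ℝ)⁻¹) • b0 - x := by
            rw [hy, sub_smul]; abel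
          rwa [heq] at this
        have hub : α ≤ α - (n:ℝ)⁻¹ := by
          apply csSup_le ⟨0, h0S⟩
          intro r hr
          exact aux_cancel hle hb (aux_trans hle hr hxle)
        have hpos : (0:ℝ) < (n:ℝ)⁻¹ := by positivity
        linarith
    have hyH : y ∈ Hsub le b := by
      rcases hkey with hk | hk
      · exact Submodule.subset_span hk
      · have : -y ∈ Hsub le b := Submodule.subset_span hk
        simpa using neg_mem this
    have hbs : α • b0 ∈ Submodule.span ℝ {b} := by
      rcases vabs_eq_or (le := le) b with h | h
      · rw [hb0def, h]
        exact Submodule.smul_mem _ _ (Submodule.mem_span_singleton_self b)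
      · rw [hb0def, h, smul_neg, ← neg_smul]
        exact Submodule.smul_mem _ _ (Submodule.mem_span_singleton_self b)
    rw [← hxeq]
    exact add_mem (Submodule.mem_sup_right hbs) (Submodule.mem_sup_left hyH)

lemma W_mono {a b : E →₀ ℝ} (hab : le (vabs le a) (vabs le b)) :
    Hsub le a ⊔ Submodule.span ℝ {a} ≤ Hsub le b ⊔ Submodule.span ℝ {b} := by
  apply sup_le
  · refine le_trans ?_ le_sup_left
    apply Submodule.span_mono
    rintro x ⟨h1, h2⟩
    exact ⟨h1, fun n => aux_trans hle (h2 n) hab⟩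
  · rw [Submodule.span_le, Set.singleton_subset_iff]
    have habs : vabs le a ∈ Hsub le b ⊔ Submodule.span ℝ {b} :=
      mem_W hle (vabs_nonneg hle a) hab
    rcases vabs_eq_or (le := le) a with h | h
    · rwa [h] at habs
    · have := neg_mem habs
      rw [h] at this
      simpa using this

end Aux

/-- the subspaces `W_a := H_a + ℝ • a` form a chain under inclusion whose
union is the whole space `⊕_E ℝ`. -/
theorem stmt13 {E : Type*}
    (le : (E →₀ ℝ) → (E →₀ ℝ) → Prop) (hle : IsLinVecOrder le) :
    (∀ a b : E →₀ ℝ,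
      Hsub le a ⊔ Submodule.span ℝ {a} ≤ Hsub le b ⊔ Submodule.span ℝ {b} ∨
      Hsub le b ⊔ Submodule.span ℝ {b} ≤ Hsub le a ⊔ Submodule.span ℝ {a}) ∧
    (∀ x : E →₀ ℝ, ∃ a : E →₀ ℝ, x ∈ Hsub le a ⊔ Submodule.span ℝ {a}) := by
  constructor
  · intro a b
    rcases aux_total hle (vabs le a) (vabs le b) with h | h
    · exact Or.inl (W_mono hle h)
    · exact Or.inr (W_mono hle h)
  · intro x
    exact ⟨x, Submodule.mem_sup_right (Submodule.mem_span_singleton_self x)⟩
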